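/- Let K be an algebraically closed field of characteristic p > 0 with p ≠ 3. Let k, l, i be integers with k < l < 2k − 9, p | l − k and i > 1, and let a, b ∈ K with a ≠ 0. Then the parametrization (t^3, t^k + t^l + a·t^{l+3} + b·t^{l+3i}) is A-equivalent to (t^3, t^k + t^l + a·t^{l+3}). -/

import Mathlib

set_option linter.unusedSectionVars false
set_option linter.unusedVariables false
set_option linter.unnecessarySimpa false
set_option maxHeartbeats 1000000


open PowerSeries

variable {K : Type*} [Field K]

/-- The coefficient of `x^i y^j` in a formal power series in two variables. -/
noncomputable def mvCoeff (f : MvPowerSeries (Fin 2) K) (p : ℕ × ℕ) : K :=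
  MvPowerSeries.coeff (Finsupp.single (0 : Fin 2) p.1 + Finsupp.single (1 : Fin 2) p.2) f

/-- Substitution of a pair of power series (of positive order) into a formal power
series in two variables; this realizes the algebra homomorphism
`ψ : K[[x,y]] → K[[t]]`, `x ↦ x(t)`, `y ↦ y(t)` associated to a parametrization. -/
noncomputable def substPair (x y : PowerSeries K) (f : MvPowerSeries (Fin 2) K) :
    PowerSeries K :=
  PowerSeries.mk fun n => ∑ p ∈ Finset.range (n + 1) ×ˢ Finset.range (n + 1),
    mvCoeff f p * PowerSeries.coeff n (x ^ p.1 * y ^ p.2)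

/-- Two parametrizations `(x(t), y(t))` and `(x̄(t), ȳ(t))` are `𝒜`-equivalent if the
associated homomorphisms `ψ, φ : K[[x,y]] → K[[t]]` satisfy `φ = r ∘ ψ ∘ l` for some
`K`-algebra automorphism `l` of `K[[x,y]]` and some `K`-algebra automorphism `r` of
`K[[t]]`. -/
def AEquiv (ψ φ : PowerSeries K × PowerSeries K) : Prop :=
  ∃ (l : MvPowerSeries (Fin 2) K ≃ₐ[K] MvPowerSeries (Fin 2) K)
    (r : PowerSeries K ≃ₐ[K] PowerSeries K),
    ∀ f : MvPowerSeries (Fin 2) K,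
      substPair φ.1 φ.2 f = r (substPair ψ.1 ψ.2 (l f))

/-- The image `K[[x(t),y(t)]] ⊆ K[[t]]` of a parametrization, as a `K`-submodule. -/
noncomputable def imageSubmodule (x y : PowerSeries K) : Submodule K (PowerSeries K) :=
  Submodule.span K (Set.range (substPair x y))

/-- A parametrization is primitive if `δ = dim_K K[[t]]/K[[x(t),y(t)]]` is finite. -/
def IsPrimitive (x y : PowerSeries K) : Prop :=
  Module.Finite K (PowerSeries K ⧸ imageSubmodule x y)

/-- The delta invariant `δ(ψ) = dim_K K[[t]]/K[[x(t),y(t)]]`. -/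
noncomputable def deltaInv (x y : PowerSeries K) : ℕ :=
  Module.finrank K (PowerSeries K ⧸ imageSubmodule x y)

/-- The semigroup of values `Γ(ψ) = { ord_t h : h ∈ K[[x(t),y(t)]], h ≠ 0 }`. -/
noncomputable def valueSemigroup (x y : PowerSeries K) : Set ℕ :=
  {n : ℕ | ∃ f : MvPowerSeries (Fin 2) K,
    substPair x y f ≠ 0 ∧ (substPair x y f).order = (n : ℕ∞)}


namespace SubstAux


open MvPowerSeries

variable {K : Type*} [Field K]
variable {τ : Type*} [Fintype τ] [DecidableEq τ]
variable {τ' : Type*} [Fintype τ'] [DecidableEq τ']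
variable {τ'' : Type*} [Fintype τ''] [DecidableEq τ'']

/-- total degree (weight) of an exponent. -/
def wt (e : τ →₀ ℕ) : ℕ := ∑ i, e i

lemma wt_add (u v : τ →₀ ℕ) : wt (u + v) = wt u + wt v := by
  simp [wt, Finset.sum_add_distrib]

lemma le_wt (e : τ →₀ ℕ) (i : τ) : e i ≤ wt e :=
  Finset.single_le_sum (fun j _ => Nat.zero_le _) (Finset.mem_univ i)

lemma wt_eq_zero_iff {e : τ →₀ ℕ} : wt e = 0 ↔ e = 0 := by
  constructor
  · intro h
    ext i
    have h2 := le_wt e i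
    simp only [Finsupp.coe_zero, Pi.zero_apply]
    omega
  · rintro rfl; simp [wt]

/-- the constant exponent bound. -/
noncomputable def bnd (N : ℕ) : τ →₀ ℕ := Finsupp.equivFunOnFinite.symm (fun _ => N)

@[simp] lemma bnd_apply (N : ℕ) (i : τ) : (bnd N : τ →₀ ℕ) i = N := rfl

lemma le_bnd_iff {d : τ →₀ ℕ} {N : ℕ} : d ≤ bnd N ↔ ∀ i, d i ≤ N := by
  simp [Finsupp.le_def]

/-- Substitution of the family `a` into `f`, implemented with finite truncated sums. -/
noncomputable def SubGen (a : τ → MvPowerSeries τ' K) (f : MvPowerSeries τ K) :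
    MvPowerSeries τ' K :=
  fun e => ∑ d ∈ Finset.Iic (bnd (wt e)),
    MvPowerSeries.coeff d f * MvPowerSeries.coeff e (∏ i, a i ^ d i)

lemma coeff_SubGen (a : τ → MvPowerSeries τ' K) (f : MvPowerSeries τ K) (e : τ' →₀ ℕ) :
    MvPowerSeries.coeff e (SubGen a f) =
      ∑ d ∈ Finset.Iic (bnd (wt e)),
        MvPowerSeries.coeff d f * MvPowerSeries.coeff e (∏ i, a i ^ d i) := rfl

section vanish

lemma coeff_mul_zero_of_lt {g h : MvPowerSeries τ' K} {n m : ℕ}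
    (hg : ∀ e, wt e < n → MvPowerSeries.coeff e g = 0)
    (hh : ∀ e, wt e < m → MvPowerSeries.coeff e h = 0) :
    ∀ e, wt e < n + m → MvPowerSeries.coeff e (g * h) = 0 := by
  intro e he
  rw [MvPowerSeries.coeff_mul]
  apply Finset.sum_eq_zero
  rintro ⟨u, v⟩ hp
  rw [Finset.HasAntidiagonal.mem_antidiagonal] at hp
  have hw : wt u + wt v = wt e := by rw [← wt_add, hp]
  rcases lt_or_ge (wt u) n with h | h
  · rw [hg u h, zero_mul]
  · rw [hh v (by omega), mul_zero]

lemma coeff_pow_zero {a : MvPowerSeries τ' K} (ha : constantCoeff a = 0) (n : ℕ) :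
    ∀ e, wt e < n → MvPowerSeries.coeff e (a ^ n) = 0 := by
  induction n with
  | zero => intro e he; omega
  | succ n ih =>
      intro e he
      have h1 : ∀ e : τ' →₀ ℕ, wt e < 1 → MvPowerSeries.coeff e a = 0 := by
        intro e' he'
        have : e' = 0 := wt_eq_zero_iff.mp (by omega)
        subst this
        simpa using ha
      rw [pow_succ, mul_comm]
      exact coeff_mul_zero_of_lt h1 ih e (by omega)

lemma coeff_prod_pow_zero {a : τ → MvPowerSeries τ' K}
    (ha : ∀ i, constantCoeff (a i) = 0) (d : τ →₀ ℕ) :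
    ∀ e, wt e < ∑ i, d i → MvPowerSeries.coeff e (∏ i, a i ^ d i) = 0 := by
  classical
  have H : ∀ s : Finset τ, ∀ e, wt e < ∑ i ∈ s, d i →
      MvPowerSeries.coeff e (∏ i ∈ s, a i ^ d i) = 0 := by
    intro s
    induction s using Finset.induction with
    | empty => intro e he; simp at he
    | insert x s hx ih =>
        intro e he
        rw [Finset.prod_insert hx]
        rw [Finset.sum_insert hx] at he
        exact coeff_mul_zero_of_lt (coeff_pow_zero (ha x) (d x)) ih e he
  exact H Finset.univ

/-- bound independence of the truncated sum. -/
lemma coeff_SubGen_of_le {a : τ → MvPowerSeries τ' K}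
    (ha : ∀ i, constantCoeff (a i) = 0) (f : MvPowerSeries τ K) (e : τ' →₀ ℕ)
    {N : ℕ} (hN : wt e ≤ N) :
    MvPowerSeries.coeff e (SubGen a f) =
      ∑ d ∈ Finset.Iic (bnd N),
        MvPowerSeries.coeff d f * MvPowerSeries.coeff e (∏ i, a i ^ d i) := by
  rw [coeff_SubGen]
  apply Finset.sum_subset
  · intro d hd
    rw [Finset.mem_Iic] at *
    exact le_trans hd (le_bnd_iff.mpr fun i => le_trans (le_bnd_iff.mp le_rfl i) hN)
  · intro d hd hnd
    rw [Finset.mem_Iic, le_bnd_iff] at hnd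
    push_neg at hnd
    obtain ⟨i, hi⟩ := hnd
    have hle : d i ≤ ∑ j, d j := Finset.single_le_sum (fun j _ => Nat.zero_le _) (Finset.mem_univ i)
    rw [coeff_prod_pow_zero ha d e (by omega), mul_zero]

end vanish

section homlemmas

variable (a : τ → MvPowerSeries τ' K)

lemma prod_pow_add (c1 c2 : τ →₀ ℕ) :
    (∏ i, a i ^ (c1 + c2) i) = (∏ i, a i ^ c1 i) * (∏ i, a i ^ c2 i) := by
  rw [← Finset.prod_mul_distrib]
  refine Finset.prod_congr rfl fun i _ => ?_
  rw [Finsupp.add_apply, pow_add]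

lemma SubGen_add (f g : MvPowerSeries τ K) :
    SubGen a (f + g) = SubGen a f + SubGen a g := by
  apply MvPowerSeries.ext; intro e
  rw [map_add, coeff_SubGen, coeff_SubGen, coeff_SubGen, ← Finset.sum_add_distrib]
  refine Finset.sum_congr rfl fun d _ => ?_
  rw [map_add, add_mul]

lemma SubGen_smul (c : K) (f : MvPowerSeries τ K) :
    SubGen a (c • f) = c • SubGen a f := by
  apply MvPowerSeries.ext; intro e
  rw [MvPowerSeries.coeff_smul, coeff_SubGen, coeff_SubGen, Finset.mul_sum]
  refine Finset.sum_congr rfl fun d _ => ?_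
  rw [MvPowerSeries.coeff_smul, mul_assoc]

lemma SubGen_C (c : K) : SubGen a (MvPowerSeries.C c) = MvPowerSeries.C c := by
  apply MvPowerSeries.ext; intro e
  rw [coeff_SubGen]
  have h0 : (0 : τ →₀ ℕ) ∈ Finset.Iic (bnd (wt e) : τ →₀ ℕ) := by
    rw [Finset.mem_Iic]; exact bot_le
  rw [Finset.sum_eq_single 0]
  · simp [MvPowerSeries.coeff_C, MvPowerSeries.coeff_one]
  · intro d hd hne
    rw [MvPowerSeries.coeff_C, if_neg hne, zero_mul]
  · intro h; exact absurd h0 h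

lemma SubGen_one : SubGen a (1 : MvPowerSeries τ K) = 1 := by
  have := SubGen_C a (1 : K)
  simpa using this

lemma SubGen_mul {a : τ → MvPowerSeries τ' K}
    (ha : ∀ i, constantCoeff (a i) = 0) (f g : MvPowerSeries τ K) :
    SubGen a (f * g) = SubGen a f * SubGen a g := by
  apply MvPowerSeries.ext; intro e
  set N := wt e with hNdef
  set P : Finset ((τ →₀ ℕ) × (τ →₀ ℕ)) :=
    (Finset.Iic (bnd N : τ →₀ ℕ)) ×ˢ (Finset.Iic (bnd N : τ →₀ ℕ)) with hP
  set T : (τ →₀ ℕ) × (τ →₀ ℕ) → K := fun c =>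
    MvPowerSeries.coeff c.1 f * MvPowerSeries.coeff c.2 g *
      MvPowerSeries.coeff e ((∏ i, a i ^ c.1 i) * (∏ i, a i ^ c.2 i)) with hT
  -- LHS
  have hL : MvPowerSeries.coeff e (SubGen a (f * g)) = ∑ c ∈ P, T c := by
    rw [coeff_SubGen]
    have step1 : ∀ d ∈ Finset.Iic (bnd N : τ →₀ ℕ),
        MvPowerSeries.coeff d (f * g) * MvPowerSeries.coeff e (∏ i, a i ^ d i)
          = ∑ c ∈ P, if c.1 + c.2 = d then T c else 0 := by
      intro d hd
      rw [MvPowerSeries.coeff_mul, Finset.sum_mul]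
      have hset : Finset.HasAntidiagonal.antidiagonal d = P.filter (fun c => c.1 + c.2 = d) := by
        apply Finset.ext
        rintro ⟨c1, c2⟩
        simp only [Finset.HasAntidiagonal.mem_antidiagonal, Finset.mem_filter, hP, Finset.mem_product,
          Finset.mem_Iic]
        constructor
        · intro hc
          have h1 : c1 ≤ bnd N := le_trans (le_of_eq_of_le rfl (by
              rw [← hc] at hd; exact le_trans (self_le_add_right c1 c2) (Finset.mem_Iic.mp hd)))
            le_rfl
          have h2 : c2 ≤ bnd N := by
            rw [← hc] at hd
            exact le_trans (self_le_add_left c2 c1) (Finset.mem_Iic.mp hd)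
          exact ⟨⟨h1, h2⟩, hc⟩
        · exact fun h => h.2
      conv_rhs => rw [← Finset.sum_filter]
      rw [hset]
      refine Finset.sum_congr rfl ?_
      rintro ⟨c1, c2⟩ hc
      rw [Finset.mem_filter] at hc
      obtain ⟨-, hcd⟩ := hc
      subst hcd
      rw [hT]
      dsimp only
      rw [prod_pow_add]
    rw [Finset.sum_congr rfl step1, Finset.sum_comm]
    refine Finset.sum_congr rfl ?_
    rintro ⟨c1, c2⟩ hc
    rw [Finset.sum_ite_eq (Finset.Iic (bnd N : τ →₀ ℕ)) (c1 + c2) (fun _ => T (c1, c2))]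
    by_cases hmem : c1 + c2 ∈ Finset.Iic (bnd N : τ →₀ ℕ)
    · rw [if_pos hmem]
    · rw [if_neg hmem]
      rw [Finset.mem_Iic, le_bnd_iff] at hmem
      push_neg at hmem
      obtain ⟨i, hi⟩ := hmem
      have hle : (c1 + c2) i ≤ ∑ j, (c1 + c2) j :=
        Finset.single_le_sum (fun j _ => Nat.zero_le _) (Finset.mem_univ i)
      have hz : MvPowerSeries.coeff e ((∏ i, a i ^ c1 i) * (∏ i, a i ^ c2 i)) = 0 := by
        rw [← prod_pow_add]
        exact coeff_prod_pow_zero ha _ e (by omega)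
      rw [hT]; dsimp only; rw [hz, mul_zero]
  -- RHS
  have hR : MvPowerSeries.coeff e (SubGen a f * SubGen a g) = ∑ c ∈ P, T c := by
    rw [MvPowerSeries.coeff_mul]
    have step1 : ∀ p ∈ Finset.HasAntidiagonal.antidiagonal e,
        MvPowerSeries.coeff p.1 (SubGen a f) * MvPowerSeries.coeff p.2 (SubGen a g)
          = ∑ c ∈ P, (MvPowerSeries.coeff c.1 f * MvPowerSeries.coeff p.1 (∏ i, a i ^ c.1 i)) *
              (MvPowerSeries.coeff c.2 g * MvPowerSeries.coeff p.2 (∏ i, a i ^ c.2 i)) := by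
      rintro ⟨p1, p2⟩ hp
      rw [Finset.HasAntidiagonal.mem_antidiagonal] at hp
      have hw1 : wt p1 ≤ N := by
        have := wt_add p1 p2; rw [hp] at this; omega
      have hw2 : wt p2 ≤ N := by
        have := wt_add p1 p2; rw [hp] at this; omega
      rw [coeff_SubGen_of_le ha f p1 hw1, coeff_SubGen_of_le ha g p2 hw2,
        Finset.sum_mul_sum]
      rw [hP, Finset.sum_product]
    rw [Finset.sum_congr rfl step1, Finset.sum_comm]
    refine Finset.sum_congr rfl ?_
    rintro ⟨c1, c2⟩ hc
    rw [hT]; dsimp only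
    rw [MvPowerSeries.coeff_mul, Finset.mul_sum]
    refine Finset.sum_congr rfl fun p hp => ?_
    ring
  rw [hL, hR]

/-- the substitution algebra homomorphism. -/
noncomputable def subGenAlgHom (a : τ → MvPowerSeries τ' K)
    (ha : ∀ i, constantCoeff (a i) = 0) :
    MvPowerSeries τ K →ₐ[K] MvPowerSeries τ' K where
  toFun := SubGen a
  map_one' := SubGen_one a
  map_mul' := SubGen_mul ha
  map_zero' := by
    have := SubGen_smul a 0 0
    simpa using this
  map_add' := SubGen_add a
  commutes' := fun c => by
    rw [MvPowerSeries.algebraMap_apply, MvPowerSeries.algebraMap_apply, Algebra.algebraMap_self]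
    exact SubGen_C a c

lemma subGenAlgHom_apply (a : τ → MvPowerSeries τ' K)
    (ha : ∀ i, constantCoeff (a i) = 0) (f : MvPowerSeries τ K) :
    subGenAlgHom a ha f = SubGen a f := rfl

lemma SubGen_pow {a : τ → MvPowerSeries τ' K}
    (ha : ∀ i, constantCoeff (a i) = 0) (f : MvPowerSeries τ K) (n : ℕ) :
    SubGen a (f ^ n) = SubGen a f ^ n := by
  rw [← subGenAlgHom_apply a ha, map_pow]; rfl

lemma SubGen_prod_pow {a : τ → MvPowerSeries τ' K}
    (ha : ∀ i, constantCoeff (a i) = 0) (b : τ'' → MvPowerSeries τ K) (d : τ'' →₀ ℕ) :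
    SubGen a (∏ i, b i ^ d i) = ∏ i, (SubGen a (b i)) ^ d i := by
  rw [← subGenAlgHom_apply a ha, map_prod]
  refine Finset.prod_congr rfl fun i _ => ?_
  rw [map_pow]; rfl

lemma SubGen_X {a : τ → MvPowerSeries τ' K}
    (ha : ∀ i, constantCoeff (a i) = 0) (i : τ) :
    SubGen a (MvPowerSeries.X i) = a i := by
  apply MvPowerSeries.ext; intro e
  rw [coeff_SubGen]
  have hprod : (∏ j, a j ^ (Finsupp.single i 1) j) = a i := by
    rw [Finset.prod_eq_single i]
    · simp
    · intro j _ hj; rw [Finsupp.single_apply, if_neg (Ne.symm hj), pow_zero]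
    · intro h; exact absurd (Finset.mem_univ i) h
  have step : ∀ d ∈ Finset.Iic (bnd (wt e) : τ →₀ ℕ),
      MvPowerSeries.coeff d (MvPowerSeries.X i : MvPowerSeries τ K) *
        MvPowerSeries.coeff e (∏ j, a j ^ d j)
      = if d = Finsupp.single i 1 then MvPowerSeries.coeff e (∏ j, a j ^ d j) else 0 := by
    intro d _
    rw [MvPowerSeries.coeff_X]
    split <;> simp
  rw [Finset.sum_congr rfl step]
  have : ∀ d : τ →₀ ℕ, (if d = Finsupp.single i 1 then MvPowerSeries.coeff e (∏ j, a j ^ d j) else 0)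
      = if d = Finsupp.single i 1 then MvPowerSeries.coeff e (a i) else 0 := by
    intro d
    split
    · rename_i h; subst h; rw [hprod]
    · rfl
  rw [Finset.sum_congr rfl (fun d _ => this d), Finset.sum_ite_eq']
  by_cases hmem : (Finsupp.single i 1 : τ →₀ ℕ) ∈ Finset.Iic (bnd (wt e) : τ →₀ ℕ)
  · rw [if_pos hmem]
  · rw [if_neg hmem]
    rw [Finset.mem_Iic, le_bnd_iff] at hmem
    push_neg at hmem
    obtain ⟨j, hj⟩ := hmem
    rw [Finsupp.single_apply] at hj
    by_cases hij : i = j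
    · subst hij
      rw [if_pos rfl] at hj
      have : wt e = 0 := by omega
      have he0 : e = 0 := wt_eq_zero_iff.mp this
      subst he0
      rw [MvPowerSeries.coeff_zero_eq_constantCoeff]
      exact (ha i).symm
    · rw [if_neg hij] at hj; omega

/-- substituting the variables themselves is the identity. -/
lemma SubGen_X_fam (f : MvPowerSeries τ K) :
    SubGen (fun i => (MvPowerSeries.X i : MvPowerSeries τ K)) f = f := by
  apply MvPowerSeries.ext; intro e
  rw [coeff_SubGen]
  have hmono : ∀ d : τ →₀ ℕ, (∏ i, (MvPowerSeries.X i : MvPowerSeries τ K) ^ d i)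
      = MvPowerSeries.monomial d 1 := by
    intro d
    have H : ∀ s : Finset τ, (∏ i ∈ s, (MvPowerSeries.X i : MvPowerSeries τ K) ^ d i)
        = MvPowerSeries.monomial (∑ i ∈ s, Finsupp.single i (d i)) 1 := by
      intro s
      induction s using Finset.induction with
      | empty => simp
      | insert x s hx ih =>
          rw [Finset.prod_insert hx, Finset.sum_insert hx, ih]
          have hXpow : (MvPowerSeries.X x : MvPowerSeries τ K) ^ d x
              = MvPowerSeries.monomial (Finsupp.single x (d x)) 1 := by
            induction d x with
            | zero => simp
            | succ n ihn =>
                rw [pow_succ, ihn]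
                have : (MvPowerSeries.X x : MvPowerSeries τ K)
                    = MvPowerSeries.monomial (Finsupp.single x 1) 1 := rfl
                rw [this, MvPowerSeries.monomial_mul_monomial, ← Finsupp.single_add, mul_one]
          rw [hXpow, MvPowerSeries.monomial_mul_monomial, one_mul]
      
    rw [H Finset.univ]
    rw [Finsupp.univ_sum_single d]
  have step : ∀ d ∈ Finset.Iic (bnd (wt e) : τ →₀ ℕ),
      MvPowerSeries.coeff d f * MvPowerSeries.coeff e (∏ i, (MvPowerSeries.X i : MvPowerSeries τ K) ^ d i)
      = if e = d then MvPowerSeries.coeff d f else 0 := by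
    intro d _
    rw [hmono d, MvPowerSeries.coeff_monomial]
    split <;> simp
  rw [Finset.sum_congr rfl step]
  have step2 : ∀ d ∈ Finset.Iic (bnd (wt e) : τ →₀ ℕ),
      (if e = d then MvPowerSeries.coeff d f else 0)
      = if d = e then MvPowerSeries.coeff e f else 0 := by
    intro d _
    by_cases h : e = d
    · subst h; simp
    · rw [if_neg h, if_neg (Ne.symm h)]
  rw [Finset.sum_congr rfl step2, Finset.sum_ite_eq']
  rw [if_pos]
  rw [Finset.mem_Iic, le_bnd_iff]
  exact fun i => le_wt e i

lemma constantCoeff_SubGen (a : τ → MvPowerSeries τ' K) (f : MvPowerSeries τ K) :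
    constantCoeff (SubGen a f) = constantCoeff f := by
  rw [← MvPowerSeries.coeff_zero_eq_constantCoeff, ← MvPowerSeries.coeff_zero_eq_constantCoeff,
    coeff_SubGen]
  have h : (Finset.Iic (bnd (wt (0 : τ' →₀ ℕ)) : τ →₀ ℕ)) = {0} := by
    have : wt (0 : τ' →₀ ℕ) = 0 := by simp [wt]
    rw [this]
    apply Finset.ext; intro d
    rw [Finset.mem_Iic, Finset.mem_singleton, le_bnd_iff]
    constructor
    · intro h; ext i; simpa using h i
    · rintro rfl; intro i; simp
  rw [h, Finset.sum_singleton]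
  simp [MvPowerSeries.coeff_one]

/-- composition law. -/
lemma SubGen_SubGen {b : τ' → MvPowerSeries τ'' K} {a : τ → MvPowerSeries τ' K}
    (hb : ∀ i, constantCoeff (b i) = 0) (ha : ∀ i, constantCoeff (a i) = 0)
    (f : MvPowerSeries τ K) :
    SubGen b (SubGen a f) = SubGen (fun i => SubGen b (a i)) f := by
  apply MvPowerSeries.ext; intro e
  set N := wt e with hNdef
  set M := (Fintype.card τ') * N + N with hMdef
  have hNM : N ≤ M := by omega
  -- LHS
  have hL : MvPowerSeries.coeff e (SubGen b (SubGen a f)) =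
      ∑ d ∈ Finset.Iic (bnd N : τ' →₀ ℕ), ∑ c ∈ Finset.Iic (bnd M : τ →₀ ℕ),
        MvPowerSeries.coeff c f * MvPowerSeries.coeff d (∏ i, a i ^ c i) *
          MvPowerSeries.coeff e (∏ i, b i ^ d i) := by
    rw [coeff_SubGen]
    refine Finset.sum_congr rfl fun d hd => ?_
    have hwd : wt d ≤ M := by
      rw [Finset.mem_Iic, le_bnd_iff] at hd
      have : wt d ≤ (Fintype.card τ') * N := by
        calc wt d = ∑ i, d i := rfl
          _ ≤ ∑ _i : τ', N := Finset.sum_le_sum (fun i _ => hd i)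
          _ = (Fintype.card τ') * N := by rw [Finset.sum_const, Finset.card_univ, smul_eq_mul]
      omega
    rw [coeff_SubGen_of_le ha f d hwd, Finset.sum_mul]
  -- RHS
  have hR : MvPowerSeries.coeff e (SubGen (fun i => SubGen b (a i)) f) =
      ∑ c ∈ Finset.Iic (bnd N : τ →₀ ℕ), ∑ d ∈ Finset.Iic (bnd N : τ' →₀ ℕ),
        MvPowerSeries.coeff c f * MvPowerSeries.coeff d (∏ i, a i ^ c i) *
          MvPowerSeries.coeff e (∏ i, b i ^ d i) := by
    rw [coeff_SubGen]
    refine Finset.sum_congr rfl fun c hc => ?_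
    have hpp : (∏ i, (SubGen b (a i)) ^ c i) = SubGen b (∏ i, a i ^ c i) := by
      rw [SubGen_prod_pow hb]
    rw [hpp, coeff_SubGen, Finset.mul_sum]
    refine Finset.sum_congr rfl fun d hd => ?_
    ring
  rw [hL, hR, Finset.sum_comm]
  -- reconcile the c-ranges : the N-range sum equals the M-range sum
  symm
  apply Finset.sum_subset
  · intro x hx
    rw [Finset.mem_Iic, le_bnd_iff] at *
    exact fun i => le_trans (hx i) hNM
  · intro c hc hnc
    rw [Finset.mem_Iic, le_bnd_iff] at hnc
    push_neg at hnc
    obtain ⟨i, hi⟩ := hnc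
    apply Finset.sum_eq_zero
    intro d hd
    have hci : c i ≤ ∑ j, c j := Finset.single_le_sum (fun j _ => Nat.zero_le _) (Finset.mem_univ i)
    rcases lt_or_ge (wt d) (∑ j, c j) with h | h
    · rw [coeff_prod_pow_zero ha c d h, mul_zero, zero_mul]
    · have : wt e < ∑ j, d j := by
        have : wt d = ∑ j, d j := rfl
        omega
      rw [coeff_prod_pow_zero hb d e this, mul_zero]

end homlemmas


section OneVar

/-- one-variable composition `f ∘ σ`. -/
noncomputable def comp (σ f : PowerSeries K) : PowerSeries K :=
  SubGen (fun _ : Unit => σ) f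

lemma wt_single (n : ℕ) : wt (Finsupp.single () n) = n := by
  simp [wt]

lemma coeff_comp (σ f : PowerSeries K) (n : ℕ) :
    PowerSeries.coeff n (comp σ f) =
      ∑ j ∈ Finset.range (n + 1), PowerSeries.coeff j f * PowerSeries.coeff n (σ ^ j) := by
  have h0 : PowerSeries.coeff n (comp σ f)
      = ∑ d ∈ Finset.Iic (bnd (wt (Finsupp.single () n))),
          MvPowerSeries.coeff d f *
            MvPowerSeries.coeff (Finsupp.single () n) (∏ i : Unit, σ ^ d i) := rfl
  rw [h0, wt_single]
  refine Finset.sum_nbij' (fun d => d ()) (fun m => Finsupp.single () m) ?_ ?_ ?_ ?_ ?_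
  · intro d hd
    rw [Finset.mem_Iic, le_bnd_iff] at hd
    rw [Finset.mem_range]
    exact Nat.lt_succ_of_le (hd ())
  · intro m hm
    rw [Finset.mem_range] at hm
    rw [Finset.mem_Iic, le_bnd_iff]
    intro i
    simp only [Finsupp.single_eq_same]
    omega
  · intro d hd
    exact (Finsupp.unique_single d).symm
  · intro m hm
    simp
  · intro d hd
    have hprod : (∏ i : Unit, σ ^ d i) = σ ^ d () := by
      rw [Finset.univ_unique, Finset.prod_singleton]
    rw [hprod, PowerSeries.coeff_def (s := d) rfl,
      PowerSeries.coeff_def (s := Finsupp.single () n) Finsupp.single_eq_same]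

end OneVar

section OneVarMore
variable {K' : Type*} [Field K']

lemma comp_add (σ f g : PowerSeries K') : comp σ (f + g) = comp σ f + comp σ g :=
  SubGen_add _ f g

lemma comp_mul (σ : PowerSeries K') (hσ : PowerSeries.constantCoeff σ = 0)
    (f g : PowerSeries K') : comp σ (f * g) = comp σ f * comp σ g :=
  SubGen_mul (fun _ => hσ) f g

lemma comp_one (σ : PowerSeries K') : comp σ (1 : PowerSeries K') = 1 := SubGen_one _

lemma comp_C (σ : PowerSeries K') (c : K') :
    comp σ (PowerSeries.C c) = PowerSeries.C c := SubGen_C _ c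

lemma comp_pow (σ : PowerSeries K') (hσ : PowerSeries.constantCoeff σ = 0)
    (f : PowerSeries K') (n : ℕ) : comp σ (f ^ n) = comp σ f ^ n :=
  SubGen_pow (fun _ => hσ) f n

lemma comp_X (σ : PowerSeries K') (hσ : PowerSeries.constantCoeff σ = 0) :
    comp σ (PowerSeries.X : PowerSeries K') = σ :=
  SubGen_X (fun _ => hσ) ()

lemma comp_Xid (f : PowerSeries K') : comp (PowerSeries.X : PowerSeries K') f = f := by
  have h : (fun _ : Unit => (PowerSeries.X : PowerSeries K'))
      = fun i : Unit => MvPowerSeries.X i := by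
    funext i; cases i; rfl
  show SubGen _ f = f
  rw [h]
  exact SubGen_X_fam f

lemma comp_assoc (b a : PowerSeries K') (hb : PowerSeries.constantCoeff b = 0)
    (ha : PowerSeries.constantCoeff a = 0) (f : PowerSeries K') :
    comp b (comp a f) = comp (comp b a) f :=
  SubGen_SubGen (fun _ => hb) (fun _ => ha) f

lemma constantCoeff_comp (σ f : PowerSeries K') :
    PowerSeries.constantCoeff (comp σ f) = PowerSeries.constantCoeff f :=
  constantCoeff_SubGen _ f

lemma ps_coeff_pow_zero {σ : PowerSeries K'} (hσ : PowerSeries.constantCoeff σ = 0)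
    {j m : ℕ} (h : m < j) : PowerSeries.coeff m (σ ^ j) = 0 := by
  rw [PowerSeries.coeff_def (s := Finsupp.single () m) Finsupp.single_eq_same]
  exact coeff_pow_zero hσ j _ (by rw [wt_single]; exact h)

lemma coeff_pow_self {σ : PowerSeries K'} (hσ : PowerSeries.constantCoeff σ = 0) (j : ℕ) :
    PowerSeries.coeff j (σ ^ j) = (PowerSeries.coeff 1 σ) ^ j := by
  induction j with
  | zero => simp
  | succ n ih =>
      rw [pow_succ, PowerSeries.coeff_mul, Finset.sum_eq_single (n, 1)]
      · rw [ih, pow_succ]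
      · rintro ⟨u, v⟩ hp hne
        rw [Finset.HasAntidiagonal.mem_antidiagonal] at hp
        rcases lt_trichotomy u n with h | h | h
        · rw [ps_coeff_pow_zero hσ h, zero_mul]
        · subst h
          exfalso; apply hne
          have : v = 1 := by omega
          rw [this]
        · have hv : v = 0 := by omega
          subst hv
          rw [PowerSeries.coeff_zero_eq_constantCoeff, hσ, mul_zero]
      · intro h
        exfalso; apply h
        rw [Finset.HasAntidiagonal.mem_antidiagonal]

noncomputable def invSeq (σ : PowerSeries K') : ℕ → K'
  | 0 => 0
  | 1 => 1
  | n + 2 =>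
      -∑ j ∈ (Finset.range (n + 2)).attach,
        invSeq σ j.1 * PowerSeries.coeff (n + 2) (σ ^ (j.1 : ℕ))
  decreasing_by exact Finset.mem_range.mp j.2

lemma comp_invSeq {σ : PowerSeries K'} (hσ0 : PowerSeries.constantCoeff σ = 0)
    (hσ1 : PowerSeries.coeff 1 σ = 1) :
    comp σ (PowerSeries.mk (invSeq σ)) = PowerSeries.X := by
  apply PowerSeries.ext; intro n
  rw [coeff_comp, PowerSeries.coeff_X]
  match n with
  | 0 =>
      rw [if_neg (by omega)]
      simp [invSeq, PowerSeries.coeff_mk]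
  | 1 =>
      rw [if_pos rfl]
      rw [Finset.sum_range_succ, Finset.sum_range_one]
      simp only [PowerSeries.coeff_mk]
      show invSeq σ 0 * PowerSeries.coeff 1 (σ ^ 0) + invSeq σ 1 * PowerSeries.coeff 1 (σ ^ 1) = 1
      simp [invSeq, pow_one, hσ1, PowerSeries.coeff_one]
  | (n + 2) =>
      rw [if_neg (by omega)]
      rw [Finset.sum_range_succ]
      simp only [PowerSeries.coeff_mk]
      rw [coeff_pow_self hσ0, hσ1, one_pow, mul_one]
      have hrec : invSeq σ (n + 2) =
          -∑ j ∈ Finset.range (n + 2), invSeq σ j * PowerSeries.coeff (n + 2) (σ ^ j) := by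
        rw [invSeq]
        rw [Finset.sum_attach (Finset.range (n + 2))
          (fun m => invSeq σ m * PowerSeries.coeff (n + 2) (σ ^ m))]
      rw [hrec]
      ring

end OneVarMore


section Equivs
variable {K' : Type*} [Field K']

lemma invSeq_const (σ : PowerSeries K') :
    PowerSeries.constantCoeff (PowerSeries.mk (invSeq σ)) = 0 := by
  rw [PowerSeries.constantCoeff_mk]
  simp [invSeq]

lemma invSeq_coeff_one (σ : PowerSeries K') :
    PowerSeries.coeff 1 (PowerSeries.mk (invSeq σ)) = 1 := by
  rw [PowerSeries.coeff_mk]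
  simp [invSeq]

/-- two-sided compositional inverse. -/
lemma comp_invSeq' {σ : PowerSeries K'} (hσ0 : PowerSeries.constantCoeff σ = 0)
    (hσ1 : PowerSeries.coeff 1 σ = 1) :
    comp (PowerSeries.mk (invSeq σ)) σ = PowerSeries.X := by
  set τ := PowerSeries.mk (invSeq σ) with hτ
  have hτ0 : PowerSeries.constantCoeff τ = 0 := invSeq_const σ
  have hτ1 : PowerSeries.coeff 1 τ = 1 := invSeq_coeff_one σ
  set ρ := PowerSeries.mk (invSeq τ) with hρdef
  have hρ0 : PowerSeries.constantCoeff ρ = 0 := invSeq_const τ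
  have hρ : comp τ ρ = PowerSeries.X := comp_invSeq hτ0 hτ1
  have hστ : comp σ τ = PowerSeries.X := comp_invSeq hσ0 hσ1
  have hρσ : ρ = σ := by
    calc ρ = comp PowerSeries.X ρ := (comp_Xid ρ).symm
      _ = comp (comp σ τ) ρ := by rw [hστ]
      _ = comp σ (comp τ ρ) := (comp_assoc σ τ hσ0 hτ0 ρ).symm
      _ = comp σ PowerSeries.X := by rw [hρ]
      _ = σ := comp_X σ hσ0
  rw [← hρσ]
  exact hρ

/-- the composition algebra automorphism of `K[[t]]` attached to `σ = t + ⋯`. -/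
noncomputable def compEquiv (σ : PowerSeries K') (hσ0 : PowerSeries.constantCoeff σ = 0)
    (hσ1 : PowerSeries.coeff 1 σ = 1) : PowerSeries K' ≃ₐ[K'] PowerSeries K' where
  toFun := comp σ
  invFun := comp (PowerSeries.mk (invSeq σ))
  left_inv := fun f => by
    rw [comp_assoc _ _ (invSeq_const σ) hσ0 f, comp_invSeq' hσ0 hσ1, comp_Xid]
  right_inv := fun f => by
    rw [comp_assoc _ _ hσ0 (invSeq_const σ) f, comp_invSeq hσ0 hσ1, comp_Xid]
  map_mul' := comp_mul σ hσ0
  map_add' := comp_add σ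
  commutes' := fun c => by
    rw [PowerSeries.algebraMap_apply, Algebra.algebraMap_self, RingHom.id_apply]
    exact comp_C σ c

lemma compEquiv_apply (σ : PowerSeries K') (hσ0 : PowerSeries.constantCoeff σ = 0)
    (hσ1 : PowerSeries.coeff 1 σ = 1) (f : PowerSeries K') :
    compEquiv σ hσ0 hσ1 f = comp σ f := rfl

variable {τ : Type*} [Fintype τ] [DecidableEq τ]

/-- substitution automorphism of a multivariate power series ring from an inverse
pair of substitution families. -/
noncomputable def subGenEquiv (a b : τ → MvPowerSeries τ K')
    (ha : ∀ i, MvPowerSeries.constantCoeff (a i) = 0)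
    (hb : ∀ i, MvPowerSeries.constantCoeff (b i) = 0)
    (hab : ∀ i, SubGen a (b i) = MvPowerSeries.X i)
    (hba : ∀ i, SubGen b (a i) = MvPowerSeries.X i) :
    MvPowerSeries τ K' ≃ₐ[K'] MvPowerSeries τ K' where
  toFun := SubGen a
  invFun := SubGen b
  left_inv := fun f => by
    rw [SubGen_SubGen hb ha f]
    have h : (fun i => SubGen b (a i)) = fun i => (MvPowerSeries.X i : MvPowerSeries τ K') := by
      funext i; exact hba i
    rw [h]
    exact SubGen_X_fam f
  right_inv := fun f => by
    rw [SubGen_SubGen ha hb f]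
    have h : (fun i => SubGen a (b i)) = fun i => (MvPowerSeries.X i : MvPowerSeries τ K') := by
      funext i; exact hab i
    rw [h]
    exact SubGen_X_fam f
  map_mul' := SubGen_mul ha
  map_add' := SubGen_add a
  commutes' := fun c => by
    rw [MvPowerSeries.algebraMap_apply, Algebra.algebraMap_self, RingHom.id_apply]
    exact SubGen_C a c

lemma subGenEquiv_apply (a b : τ → MvPowerSeries τ K')
    (ha : ∀ i, MvPowerSeries.constantCoeff (a i) = 0)
    (hb : ∀ i, MvPowerSeries.constantCoeff (b i) = 0)
    (hab : ∀ i, SubGen a (b i) = MvPowerSeries.X i)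
    (hba : ∀ i, SubGen b (a i) = MvPowerSeries.X i) (f : MvPowerSeries τ K') :
    subGenEquiv a b ha hb hab hba f = SubGen a f := rfl

end Equivs


variable {K : Type*} [Field K]

lemma coeff_one_add_pow (c : K) (n j : ℕ) (h : j ≤ n) :
    PowerSeries.coeff j ((1 + PowerSeries.C c * PowerSeries.X) ^ n)
      = (n.choose j : K) * c ^ j := by
  rw [add_comm (1 : PowerSeries K), add_pow, map_sum]
  have hterm : ∀ k, PowerSeries.coeff j
      ((PowerSeries.C c * PowerSeries.X) ^ k * 1 ^ (n - k) * ((n.choose k : ℕ) : PowerSeries K))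
        = if j = k then (n.choose k : K) * c ^ k else 0 := by
    intro k
    have h1 : (PowerSeries.C c * PowerSeries.X) ^ k * 1 ^ (n - k)
        * ((n.choose k : ℕ) : PowerSeries K)
        = PowerSeries.C (c ^ k) * PowerSeries.X ^ k * PowerSeries.C ((n.choose k : ℕ) : K) := by
      rw [one_pow, mul_one, mul_pow, ← map_pow, ← map_natCast (PowerSeries.C (R := K))]
    rw [h1, PowerSeries.coeff_mul_C, PowerSeries.coeff_C_mul, PowerSeries.coeff_X_pow]
    split <;> ring
  rw [Finset.sum_congr rfl (fun k _ => hterm k),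
    Finset.sum_ite_eq (Finset.range (n + 1)) j (fun k => (n.choose k : K) * c ^ k),
    if_pos (Finset.mem_range.mpr (by omega))]

section Solve

variable (a b : K) (m i : ℕ)

/-- the target right-hand side `w = 1 + a·X + b·X^i`. -/
noncomputable def wser : PowerSeries K :=
  1 + PowerSeries.C a * PowerSeries.X + PowerSeries.C b * PowerSeries.X ^ i

/-- the defining polynomial `G = Y^m + (aX)·Y^{m+3} − w` over `K[[X]]`. -/
noncomputable def Gpoly : Polynomial (PowerSeries K) :=
  Polynomial.X ^ m + Polynomial.C (PowerSeries.C a * PowerSeries.X) * Polynomial.X ^ (m + 3)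
    - Polynomial.C (wser a b i)

lemma Gpoly_eval (s : PowerSeries K) :
    (Gpoly a b m i).eval s
      = s ^ m + PowerSeries.C a * PowerSeries.X * s ^ (m + 3) - wser a b i := by
  simp [Gpoly]

lemma Gpoly_deriv_eval (hmK : ((m : ℕ) : K) = 0) (hm1 : 1 ≤ m) (s : PowerSeries K) :
    (Polynomial.derivative (Gpoly a b m i)).eval s
      = PowerSeries.C (3 * a) * PowerSeries.X * s ^ (m + 2) := by
  have hder : Polynomial.derivative (Gpoly a b m i)
      = Polynomial.C ((m : ℕ) : PowerSeries K) * Polynomial.X ^ (m - 1)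
        + Polynomial.C (PowerSeries.C a * PowerSeries.X) *
            (Polynomial.C (((m + 3 : ℕ) : PowerSeries K)) * Polynomial.X ^ (m + 2)) := by
    rw [Gpoly, map_sub, map_add, Polynomial.derivative_X_pow, Polynomial.derivative_C,
      Polynomial.derivative_C_mul, Polynomial.derivative_X_pow, sub_zero]
    norm_num
  rw [hder]
  have hm0 : ((m : ℕ) : PowerSeries K) = 0 := by
    rw [← map_natCast (PowerSeries.C (R := K)) m, hmK, map_zero]
  have hm3 : ((m + 3 : ℕ) : PowerSeries K) = PowerSeries.C 3 := by
    rw [← map_natCast (PowerSeries.C (R := K)) (m + 3)]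
    congr 1
    push_cast [hmK]
    ring
  simp only [Polynomial.eval_add, Polynomial.eval_mul, Polynomial.eval_C, Polynomial.eval_pow,
    Polynomial.eval_X, hm0, hm3]
  rw [map_mul]
  ring

variable [IsAlgClosed K]

/-- base case: an `s₀ = 1 + cX` killing the coefficients up to order 2. -/
lemma base_case (ha3 : (3 : K) * a ≠ 0) (hmK : ((m : ℕ) : K) = 0) (hm2 : 2 ≤ m) (hi : 2 ≤ i) :
    ∃ s : PowerSeries K, PowerSeries.constantCoeff s = 1 ∧
      ∀ j ≤ 2, PowerSeries.coeff j ((Gpoly a b m i).eval s) = 0 := by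
  -- choose c a root of  (choose m 2)·c² + 3a·c − (if i = 2 then b else 0) = 0
  set β : K := if i = 2 then b else 0 with hβ
  set q : Polynomial K := Polynomial.C ((m.choose 2 : K)) * Polynomial.X ^ 2
      + Polynomial.C ((3 : K) * a) * Polynomial.X - Polynomial.C β with hq
  have hq1 : q.coeff 1 = (3 : K) * a := by
    simp [hq, Polynomial.coeff_X_pow]
  have hqdeg : q.degree ≠ 0 := by
    have h1 : 1 ≤ q.natDegree := Polynomial.le_natDegree_of_ne_zero (by rw [hq1]; exact ha3)
    have hq0 : q ≠ 0 := by
      intro h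
      rw [h, Polynomial.coeff_zero] at hq1
      exact ha3 hq1.symm
    rw [Polynomial.degree_eq_natDegree hq0]
    intro hdeg
    have hnd : q.natDegree = 0 := by exact_mod_cast hdeg
    omega
  obtain ⟨c, hc⟩ := IsAlgClosed.exists_root q hqdeg
  have hceq : (m.choose 2 : K) * c ^ 2 + (3 : K) * a * c - β = 0 := by
    have := hc
    simp only [Polynomial.IsRoot, hq, Polynomial.eval_sub, Polynomial.eval_add,
      Polynomial.eval_mul, Polynomial.eval_C, Polynomial.eval_pow, Polynomial.eval_X] at this
    linear_combination this
  refine ⟨1 + PowerSeries.C c * PowerSeries.X, ?_, ?_⟩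
  · simp
  · intro j hj
    rw [Gpoly_eval]
    have hconst : PowerSeries.constantCoeff (1 + PowerSeries.C c * PowerSeries.X) = 1 := by
      simp
    interval_cases j
    · -- j = 0
      rw [map_sub, map_add]
      have h1 : PowerSeries.coeff 0 ((1 + PowerSeries.C c * PowerSeries.X) ^ m) = 1 := by
        rw [coeff_one_add_pow c m 0 (by omega)]
        simp
      have h2 : PowerSeries.coeff 0 (PowerSeries.C a * PowerSeries.X *
          (1 + PowerSeries.C c * PowerSeries.X) ^ (m + 3)) = 0 := by
        rw [mul_assoc, PowerSeries.coeff_C_mul]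
        rw [PowerSeries.coeff_zero_eq_constantCoeff]
        simp
      have h3 : PowerSeries.coeff 0 (wser a b i : PowerSeries K) = 1 := by
        rw [wser, map_add, map_add, PowerSeries.coeff_one, PowerSeries.coeff_C_mul,
          PowerSeries.coeff_C_mul, PowerSeries.coeff_X, PowerSeries.coeff_X_pow,
          if_pos rfl, if_neg (by omega), if_neg (by omega)]
        ring
      rw [h1, h2, h3]; ring
    · -- j = 1
      rw [map_sub, map_add]
      have h1 : PowerSeries.coeff 1 ((1 + PowerSeries.C c * PowerSeries.X) ^ m) = 0 := by
        rw [coeff_one_add_pow c m 1 (by omega)]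
        simp [hmK]
      have h2 : PowerSeries.coeff 1 (PowerSeries.C a * PowerSeries.X *
          (1 + PowerSeries.C c * PowerSeries.X) ^ (m + 3)) = a := by
        rw [mul_assoc, PowerSeries.coeff_C_mul]
        have : PowerSeries.coeff 1 (PowerSeries.X *
            (1 + PowerSeries.C c * PowerSeries.X) ^ (m + 3))
            = PowerSeries.coeff 0 ((1 + PowerSeries.C c * PowerSeries.X) ^ (m + 3)) := by
          have := PowerSeries.coeff_X_pow_mul
            ((1 + PowerSeries.C c * PowerSeries.X) ^ (m + 3)) 1 0
          simpa using this
        rw [this, coeff_one_add_pow c (m+3) 0 (by omega)]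
        simp
      have h3 : PowerSeries.coeff 1 (wser a b i : PowerSeries K) = a := by
        rw [wser, map_add, map_add]
        rw [PowerSeries.coeff_one, PowerSeries.coeff_C_mul, PowerSeries.coeff_C_mul,
          PowerSeries.coeff_X, PowerSeries.coeff_X_pow]
        rw [if_neg (by omega), if_pos rfl, if_neg (by omega)]
        ring
      rw [h1, h2, h3]; ring
    · -- j = 2
      rw [map_sub, map_add]
      have h1 : PowerSeries.coeff 2 ((1 + PowerSeries.C c * PowerSeries.X) ^ m) =
          (m.choose 2 : K) * c ^ 2 := coeff_one_add_pow c m 2 hm2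
      have h2 : PowerSeries.coeff 2 (PowerSeries.C a * PowerSeries.X *
          (1 + PowerSeries.C c * PowerSeries.X) ^ (m + 3)) = (3:K) * a * c := by
        rw [mul_assoc, PowerSeries.coeff_C_mul]
        have : PowerSeries.coeff 2 (PowerSeries.X *
            (1 + PowerSeries.C c * PowerSeries.X) ^ (m + 3))
            = PowerSeries.coeff 1 ((1 + PowerSeries.C c * PowerSeries.X) ^ (m + 3)) := by
          have := PowerSeries.coeff_X_pow_mul
            ((1 + PowerSeries.C c * PowerSeries.X) ^ (m + 3)) 1 1
          simpa using this
        rw [this, coeff_one_add_pow c (m+3) 1 (by omega)]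
        have : ((m + 3).choose 1 : K) = 3 := by
          rw [Nat.choose_one_right]
          push_cast [hmK]
          ring
        rw [this]
        ring
      have h3 : PowerSeries.coeff 2 (wser a b i : PowerSeries K) = β := by
        rw [wser, map_add, map_add]
        rw [PowerSeries.coeff_one, PowerSeries.coeff_C_mul, PowerSeries.coeff_C_mul,
          PowerSeries.coeff_X, PowerSeries.coeff_X_pow]
        rw [if_neg (by omega), if_neg (by omega)]
        by_cases h2i : i = 2
        · rw [if_pos h2i.symm, hβ, if_pos h2i]; ring
        · rw [if_neg (fun hh => h2i hh.symm), hβ, if_neg h2i]; ring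
      rw [h1, h2, h3]
      linear_combination hceq

end Solve


section Solve2

variable (a b : K) (m i : ℕ)

lemma step_lemma (ha3 : (3 : K) * a ≠ 0) (hmK : ((m : ℕ) : K) = 0) (hm1 : 1 ≤ m)
    (s : PowerSeries K) (n : ℕ) (hn : 2 ≤ n) (hs : PowerSeries.constantCoeff s = 1)
    (hgood : ∀ j ≤ n, PowerSeries.coeff j ((Gpoly a b m i).eval s) = 0) :
    PowerSeries.constantCoeff (s + PowerSeries.C (-(((3 : K) * a)⁻¹) *
        PowerSeries.coeff (n + 1) ((Gpoly a b m i).eval s)) * PowerSeries.X ^ n) = 1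
    ∧ ∀ j ≤ n + 1, PowerSeries.coeff j ((Gpoly a b m i).eval
        (s + PowerSeries.C (-(((3 : K) * a)⁻¹) *
          PowerSeries.coeff (n + 1) ((Gpoly a b m i).eval s)) * PowerSeries.X ^ n)) = 0 := by
  set c : K := -(((3 : K) * a)⁻¹) * PowerSeries.coeff (n + 1) ((Gpoly a b m i).eval s) with hc
  clear_value c
  set y : PowerSeries K := PowerSeries.C c * PowerSeries.X ^ n with hy
  clear_value y
  constructor
  · rw [map_add, hs, hy, map_mul, map_pow, PowerSeries.constantCoeff_X, zero_pow (by omega),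
      mul_zero, add_zero]
  obtain ⟨k, hk⟩ := Polynomial.binomExpansion (Gpoly a b m i) s y
  rw [Gpoly_deriv_eval a b m i hmK hm1 s] at hk
  have hlin : PowerSeries.C (3 * a) * PowerSeries.X * s ^ (m + 2) * y
      = PowerSeries.C (3 * a * c) * (PowerSeries.X ^ (n + 1) * s ^ (m + 2)) := by
    rw [hy, pow_succ]
    simp only [map_mul]
    ring
  have hquad : k * y ^ 2 = (k * PowerSeries.C (c ^ 2)) * PowerSeries.X ^ (2 * n) := by
    rw [hy, mul_pow, ← map_pow, ← pow_mul, mul_comm n 2]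
    ring
  intro j hj
  rw [hk, hlin, hquad, map_add, map_add]
  have hq0 : PowerSeries.coeff j ((k * PowerSeries.C (c ^ 2)) * PowerSeries.X ^ (2 * n)) = 0 := by
    have hdv : (PowerSeries.X : PowerSeries K) ^ (2 * n) ∣
        k * PowerSeries.C (c ^ 2) * PowerSeries.X ^ (2 * n) := dvd_mul_left _ _
    exact PowerSeries.X_pow_dvd_iff.mp hdv j (by omega)
  rcases Nat.lt_or_ge j (n + 1) with hjn | hjn
  · -- j ≤ n
    have h1 : PowerSeries.coeff j ((Gpoly a b m i).eval s) = 0 := hgood j (by omega)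
    have h2 : PowerSeries.coeff j
        (PowerSeries.C (3 * a * c) * (PowerSeries.X ^ (n + 1) * s ^ (m + 2))) = 0 := by
      rw [PowerSeries.coeff_C_mul]
      have hdv : (PowerSeries.X : PowerSeries K) ^ (n + 1) ∣
          PowerSeries.X ^ (n + 1) * s ^ (m + 2) := dvd_mul_right _ _
      rw [PowerSeries.X_pow_dvd_iff.mp hdv j (by omega), mul_zero]
    rw [h1, h2, hq0]
    ring
  · -- j = n+1
    have hj1 : j = n + 1 := by omega
    subst hj1
    have h2 : PowerSeries.coeff (n + 1)
        (PowerSeries.C (3 * a * c) * (PowerSeries.X ^ (n + 1) * s ^ (m + 2))) = 3 * a * c := by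
      rw [PowerSeries.coeff_C_mul]
      have h3 := PowerSeries.coeff_X_pow_mul (s ^ (m + 2)) (n + 1) 0
      rw [zero_add] at h3
      rw [h3, PowerSeries.coeff_zero_eq_constantCoeff, map_pow, hs, one_pow, mul_one]
    rw [h2, hq0, add_zero, hc]
    have h1 : (3 : K) * a * ((3 : K) * a)⁻¹ = 1 := mul_inv_cancel₀ ha3
    linear_combination (-(PowerSeries.coeff (n + 1) ((Gpoly a b m i).eval s))) * h1

variable [IsAlgClosed K]

lemma exists_solution (ha3 : (3 : K) * a ≠ 0) (hmK : ((m : ℕ) : K) = 0)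
    (hm2 : 2 ≤ m) (hi : 2 ≤ i) :
    ∃ s : PowerSeries K, PowerSeries.constantCoeff s = 1 ∧
      s ^ m + PowerSeries.C a * PowerSeries.X * s ^ (m + 3) = wser a b i := by
  obtain ⟨s0, hs0c, hs0⟩ := base_case a b m i ha3 hmK hm2 hi
  let step : PowerSeries K → ℕ → PowerSeries K := fun s n =>
    s + PowerSeries.C (-(((3 : K) * a)⁻¹) *
      PowerSeries.coeff (n + 1) ((Gpoly a b m i).eval s)) * PowerSeries.X ^ n
  let S : ℕ → PowerSeries K := fun N => Nat.rec s0 (fun N sN => step sN (N + 2)) N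
  have hSsucc : ∀ N, S (N + 1) = step (S N) (N + 2) := fun N => rfl
  have hSgood : ∀ N, PowerSeries.constantCoeff (S N) = 1 ∧
      ∀ j ≤ N + 2, PowerSeries.coeff j ((Gpoly a b m i).eval (S N)) = 0 := by
    intro N
    induction N with
    | zero => exact ⟨hs0c, hs0⟩
    | succ N ih =>
        rw [hSsucc]
        exact step_lemma a b m i ha3 hmK (by omega) (S N) (N + 2) (by omega) ih.1 ih.2
  have hScoeff : ∀ N j, j ≠ N + 2 →
      PowerSeries.coeff j (S (N + 1)) = PowerSeries.coeff j (S N) := by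
    intro N j hj
    rw [hSsucc, show step (S N) (N + 2) = S N + PowerSeries.C (-(((3 : K) * a)⁻¹) *
      PowerSeries.coeff (N + 3) ((Gpoly a b m i).eval (S N))) * PowerSeries.X ^ (N + 2) from rfl,
      map_add, PowerSeries.coeff_C_mul, PowerSeries.coeff_X_pow, if_neg hj, mul_zero, add_zero]
  have hstab : ∀ N M j, N ≤ M → j < N + 2 →
      PowerSeries.coeff j (S M) = PowerSeries.coeff j (S N) := by
    intro N M j hNM hj
    induction M with
    | zero =>
        have h : N = 0 := by omega
        subst h; rfl
    | succ M ih =>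
        rcases Nat.lt_or_ge N (M + 1) with h | h
        · rw [hScoeff M j (by omega)]
          exact ih (by omega)
        · have h2 : N = M + 1 := by omega
          subst h2; rfl
  set s : PowerSeries K := PowerSeries.mk (fun j => PowerSeries.coeff j (S j)) with hsdef
  have hs_eqN : ∀ N j, j ≤ N → PowerSeries.coeff j s = PowerSeries.coeff j (S N) := by
    intro N j hj
    have h1 : PowerSeries.coeff j s = PowerSeries.coeff j (S j) := by
      rw [hsdef, PowerSeries.coeff_mk]
    rw [h1, hstab j N j hj (by omega)]
  have hconst : PowerSeries.constantCoeff s = 1 := by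
    have h1 := hs_eqN 0 0 le_rfl
    rw [← PowerSeries.coeff_zero_eq_constantCoeff]
    show PowerSeries.coeff 0 s = 1
    rw [h1, PowerSeries.coeff_zero_eq_constantCoeff]
    exact (hSgood 0).1
  have hzero : ∀ n, PowerSeries.coeff n ((Gpoly a b m i).eval s) = 0 := by
    intro n
    have hdvd : (PowerSeries.X : PowerSeries K) ^ (n + 1) ∣ s - S n := by
      rw [PowerSeries.X_pow_dvd_iff]
      intro m' hm'
      rw [map_sub, hs_eqN n m' (by omega), sub_self]
    have hdvd2 : (PowerSeries.X : PowerSeries K) ^ (n + 1) ∣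
        (Gpoly a b m i).eval s - (Gpoly a b m i).eval (S n) :=
      dvd_trans hdvd (Polynomial.sub_dvd_eval_sub s (S n) (Gpoly a b m i))
    have h0 := PowerSeries.X_pow_dvd_iff.mp hdvd2 n (by omega)
    rw [map_sub] at h0
    have h1 := (hSgood n).2 n (by omega)
    linear_combination h0 + h1
  have heval : (Gpoly a b m i).eval s = 0 := PowerSeries.ext fun n => by
    rw [hzero n, map_zero]
  rw [Gpoly_eval] at heval
  exact ⟨s, hconst, by linear_combination heval⟩

end Solve2


section Iota
variable {K' : Type*} [Field K']

/-- the inclusion `K[[t]] → K[[x,y]]`, `t ↦ x`. -/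
noncomputable def iota (g : PowerSeries K') : MvPowerSeries (Fin 2) K' :=
  SubGen (fun _ : Unit => (MvPowerSeries.X 0 : MvPowerSeries (Fin 2) K')) g

lemma hX0const : MvPowerSeries.constantCoeff (MvPowerSeries.X 0 : MvPowerSeries (Fin 2) K') = 0 :=
  MvPowerSeries.constantCoeff_X 0

lemma iota_mul (f g : PowerSeries K') : iota (f * g) = iota f * iota g :=
  SubGen_mul (fun _ => hX0const) f g

lemma iota_one : iota (1 : PowerSeries K') = 1 := SubGen_one _

lemma iota_constantCoeff (g : PowerSeries K') :
    MvPowerSeries.constantCoeff (iota g) = PowerSeries.constantCoeff g :=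
  constantCoeff_SubGen _ g

lemma iota_X : iota (PowerSeries.X : PowerSeries K') = MvPowerSeries.X 0 :=
  SubGen_X (fun _ => hX0const) ()

lemma SubGen_iota {τx : Type*} [Fintype τx] [DecidableEq τx]
    (b : Fin 2 → MvPowerSeries τx K')
    (hb : ∀ j, MvPowerSeries.constantCoeff (b j) = 0) (g : PowerSeries K') :
    SubGen b (iota g) = SubGen (fun _ : Unit => b 0) g := by
  unfold iota
  rw [SubGen_SubGen hb (fun _ => hX0const) g]
  have hfam : (fun _ : Unit => SubGen b (MvPowerSeries.X 0)) = fun _ : Unit => b 0 := by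
    funext j
    exact SubGen_X hb 0
  rw [hfam]

lemma iota_comp (h : PowerSeries K') (hh : PowerSeries.constantCoeff h = 0)
    (g : PowerSeries K') :
    SubGen (fun _ : Unit => iota h) g = iota (comp h g) := by
  unfold iota comp
  rw [SubGen_SubGen (fun _ : Unit => hX0const) (fun _ : Unit => hh) g]

end Iota

section Bridge
variable {K' : Type*} [Field K']

lemma constantCoeff_X_pow (q : ℕ) (hq : q ≠ 0) :
    PowerSeries.constantCoeff ((PowerSeries.X : PowerSeries K') ^ q) = 0 := by
  rw [map_pow, PowerSeries.constantCoeff_X, zero_pow hq]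

lemma substPair_eq (x y : PowerSeries K') (f : MvPowerSeries (Fin 2) K') :
    substPair x y f = SubGen ![x, y] f := by
  apply PowerSeries.ext; intro n
  rw [substPair, PowerSeries.coeff_mk]
  have hR : PowerSeries.coeff n (SubGen ![x, y] f)
      = ∑ d ∈ Finset.Iic (bnd n : Fin 2 →₀ ℕ),
          MvPowerSeries.coeff d f *
            MvPowerSeries.coeff (Finsupp.single () n) (∏ j, (![x, y] : Fin 2 → PowerSeries K') j ^ d j) := by
    rw [PowerSeries.coeff_def (s := Finsupp.single () n) Finsupp.single_eq_same, coeff_SubGen,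
      wt_single]
  rw [hR]
  symm
  refine Finset.sum_nbij' (fun d => ((d 0 : ℕ), (d 1 : ℕ)))
    (fun p => Finsupp.single (0 : Fin 2) p.1 + Finsupp.single (1 : Fin 2) p.2) ?_ ?_ ?_ ?_ ?_
  · intro d hd
    rw [Finset.mem_Iic, le_bnd_iff] at hd
    rw [Finset.mem_product, Finset.mem_range, Finset.mem_range]
    exact ⟨Nat.lt_succ_of_le (hd 0), Nat.lt_succ_of_le (hd 1)⟩
  · rintro ⟨p1, p2⟩ hp
    rw [Finset.mem_product, Finset.mem_range, Finset.mem_range] at hp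
    rw [Finset.mem_Iic, le_bnd_iff]
    intro j
    fin_cases j <;> simp [Finsupp.single_apply] <;> omega
  · intro d hd
    ext j
    fin_cases j <;> simp [Finsupp.single_apply]
  · rintro ⟨p1, p2⟩ hp
    simp [Finsupp.single_apply]
  · intro d hd
    have hprod : (∏ j, (![x, y] : Fin 2 → PowerSeries K') j ^ d j) = x ^ d 0 * y ^ d 1 := by
      rw [Fin.prod_univ_two]
      simp
    have hsing : Finsupp.single (0 : Fin 2) (d 0) + Finsupp.single (1 : Fin 2) (d 1) = d := by
      ext j
      fin_cases j <;> simp [Finsupp.single_apply]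
    rw [hprod, mvCoeff, hsing]
    rw [PowerSeries.coeff_def (s := Finsupp.single () n) Finsupp.single_eq_same]

end Bridge

end SubstAux

/-- in characteristic `p > 0`, `p ≠ 3`, for `k < l < 2k − 9` with
`p ∣ l − k`, `i > 1` and `a ≠ 0`,
`(t³, t^k + t^l + a·t^{l+3} + b·t^{l+3i}) ∼_𝒜 (t³, t^k + t^l + a·t^{l+3})`. -/
theorem statement_5 [IsAlgClosed K] (p : ℕ) [CharP K p] (hp : 0 < p) (hp3 : p ≠ 3)
    (k l i : ℕ) (hkl : k < l) (hl : l + 9 < 2 * k) (hdvd : p ∣ l - k) (hi : 1 < i)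
    (a b : K) (ha : a ≠ 0) :
    AEquiv ((PowerSeries.X : PowerSeries K) ^ 3,
        PowerSeries.X ^ k + PowerSeries.X ^ l + PowerSeries.C a * PowerSeries.X ^ (l + 3)
          + PowerSeries.C b * PowerSeries.X ^ (l + 3 * i))
      ((PowerSeries.X : PowerSeries K) ^ 3,
        PowerSeries.X ^ k + PowerSeries.X ^ l
          + PowerSeries.C a * PowerSeries.X ^ (l + 3)) := by
  classical
  open SubstAux in
  obtain ⟨m, rfl⟩ : ∃ m, l = k + m := ⟨l - k, by omega⟩
  have hdvd' : p ∣ m := by simpa using hdvd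
  haveI : NeZero p := ⟨by omega⟩
  have hprime : Nat.Prime p := (CharP.char_is_prime_of_pos K p).out
  have h3K : (3 : K) ≠ 0 := by
    intro h
    have h3 : p ∣ 3 := (CharP.cast_eq_zero_iff K p 3).mp (by exact_mod_cast h)
    exact hp3 ((Nat.prime_dvd_prime_iff_eq hprime Nat.prime_three).mp h3)
  have ha3 : (3 : K) * a ≠ 0 := mul_ne_zero h3K ha
  have hm2 : 2 ≤ m := le_trans hprime.two_le (Nat.le_of_dvd (by omega) hdvd')
  have hmK : ((m : ℕ) : K) = 0 := (CharP.cast_eq_zero_iff K p m).mpr hdvd'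
  have hk0 : k ≠ 0 := by omega
  obtain ⟨s, hs1, hseq⟩ := SubstAux.exists_solution a b m i ha3 hmK hm2 hi
  -- abbreviations
  have hu30 : PowerSeries.constantCoeff ((PowerSeries.X : PowerSeries K) ^ 3) = 0 :=
    SubstAux.constantCoeff_X_pow 3 (by omega)
  obtain ⟨s3, hs3⟩ : ∃ t, t = SubstAux.comp ((PowerSeries.X : PowerSeries K) ^ 3) s := ⟨_, rfl⟩
  have hs30 : PowerSeries.constantCoeff s3 = 1 := by
    rw [hs3, SubstAux.constantCoeff_comp]; exact hs1
  obtain ⟨σ, hσd⟩ : ∃ t, t = PowerSeries.X * s3 := ⟨_, rfl⟩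
  have hσ0 : PowerSeries.constantCoeff σ = 0 := by
    rw [hσd, map_mul, PowerSeries.constantCoeff_X, zero_mul]
  have hσ1 : PowerSeries.coeff 1 σ = 1 := by
    rw [hσd, show (1 : ℕ) = 0 + 1 from rfl, PowerSeries.coeff_succ_X_mul,
      PowerSeries.coeff_zero_eq_constantCoeff]
    exact hs30
  -- the substituted functional equation
  have h3eq : s3 ^ m + PowerSeries.C a * PowerSeries.X ^ 3 * s3 ^ (m + 3)
      = 1 + PowerSeries.C a * PowerSeries.X ^ 3
        + PowerSeries.C b * ((PowerSeries.X : PowerSeries K) ^ 3) ^ i := by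
    have h := congrArg (SubstAux.comp ((PowerSeries.X : PowerSeries K) ^ 3)) hseq
    rw [SubstAux.comp_add, SubstAux.comp_pow _ hu30, SubstAux.comp_mul _ hu30,
      SubstAux.comp_mul _ hu30, SubstAux.comp_pow _ hu30, SubstAux.comp_C,
      SubstAux.comp_X _ hu30, ← hs3] at h
    rw [h, SubstAux.wser, SubstAux.comp_add, SubstAux.comp_add, SubstAux.comp_one,
      SubstAux.comp_mul _ hu30, SubstAux.comp_C, SubstAux.comp_X _ hu30,
      SubstAux.comp_mul _ hu30, SubstAux.comp_C, SubstAux.comp_pow _ hu30,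
      SubstAux.comp_X _ hu30]
  -- the left coordinate-change data
  obtain ⟨χ, hχd⟩ : ∃ t, t = PowerSeries.X * s ^ 3 := ⟨_, rfl⟩
  have hχ0 : PowerSeries.constantCoeff χ = 0 := by
    rw [hχd, map_mul, PowerSeries.constantCoeff_X, zero_mul]
  have hχ1 : PowerSeries.coeff 1 χ = 1 := by
    rw [hχd, show (1 : ℕ) = 0 + 1 from rfl, PowerSeries.coeff_succ_X_mul,
      PowerSeries.coeff_zero_eq_constantCoeff, map_pow, hs1, one_pow]
  obtain ⟨χi, hχid⟩ : ∃ t, t = PowerSeries.mk (SubstAux.invSeq χ) := ⟨_, rfl⟩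
  have hχi0 : PowerSeries.constantCoeff χi = 0 := by rw [hχid]; exact SubstAux.invSeq_const χ
  have hAB : SubstAux.comp χ χi = PowerSeries.X := by
    rw [hχid]; exact SubstAux.comp_invSeq hχ0 hχ1
  have hBA : SubstAux.comp χi χ = PowerSeries.X := by
    rw [hχid]; exact SubstAux.comp_invSeq' hχ0 hχ1
  obtain ⟨U, hUd⟩ : ∃ t, t = s ^ k := ⟨_, rfl⟩
  have hU1 : PowerSeries.constantCoeff U = 1 := by rw [hUd, map_pow, hs1, one_pow]
  obtain ⟨Uq, hUqd⟩ : ∃ t, t = SubstAux.comp χi U := ⟨_, rfl⟩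
  have hUq1 : PowerSeries.constantCoeff Uq = 1 := by
    rw [hUqd, SubstAux.constantCoeff_comp]; exact hU1
  obtain ⟨Ub, hUbd⟩ : ∃ t, t = PowerSeries.invOfUnit Uq 1 := ⟨_, rfl⟩
  have hUqUb : Uq * Ub = 1 := by
    rw [hUbd]
    exact PowerSeries.mul_invOfUnit Uq 1 (by rw [hUq1]; rfl)
  -- substitution families
  obtain ⟨aL, haLd⟩ : ∃ t, t = (![SubstAux.iota χ, MvPowerSeries.X 1 * SubstAux.iota U] :
      Fin 2 → MvPowerSeries (Fin 2) K) := ⟨_, rfl⟩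
  obtain ⟨bL, hbLd⟩ : ∃ t, t = (![SubstAux.iota χi, MvPowerSeries.X 1 * SubstAux.iota Ub] :
      Fin 2 → MvPowerSeries (Fin 2) K) := ⟨_, rfl⟩
  have haL : ∀ j, MvPowerSeries.constantCoeff (aL j) = 0 := by
    intro j
    fin_cases j
    · rw [haLd]
      show MvPowerSeries.constantCoeff (SubstAux.iota χ) = 0
      rw [SubstAux.iota_constantCoeff]; exact hχ0
    · rw [haLd]
      show MvPowerSeries.constantCoeff (MvPowerSeries.X 1 * SubstAux.iota U) = 0
      rw [map_mul, MvPowerSeries.constantCoeff_X, zero_mul]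
  have hbL : ∀ j, MvPowerSeries.constantCoeff (bL j) = 0 := by
    intro j
    fin_cases j
    · rw [hbLd]
      show MvPowerSeries.constantCoeff (SubstAux.iota χi) = 0
      rw [SubstAux.iota_constantCoeff]; exact hχi0
    · rw [hbLd]
      show MvPowerSeries.constantCoeff (MvPowerSeries.X 1 * SubstAux.iota Ub) = 0
      rw [map_mul, MvPowerSeries.constantCoeff_X, zero_mul]
  have haL0 : aL 0 = SubstAux.iota χ := by rw [haLd]; rfl
  have haL1 : aL 1 = MvPowerSeries.X 1 * SubstAux.iota U := by rw [haLd]; rfl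
  have hbL0 : bL 0 = SubstAux.iota χi := by rw [hbLd]; rfl
  have hbL1 : bL 1 = MvPowerSeries.X 1 * SubstAux.iota Ub := by rw [hbLd]; rfl
  -- inverse verifications
  have hfamb : (fun _ : Unit => bL 0) = fun _ : Unit => SubstAux.iota χi := by
    funext j; rw [hbL0]
  have hfama : (fun _ : Unit => aL 0) = fun _ : Unit => SubstAux.iota χ := by
    funext j; rw [haL0]
  have hba : ∀ j, SubstAux.SubGen bL (aL j) = MvPowerSeries.X j := by
    intro j
    fin_cases j
    · show SubstAux.SubGen bL (aL 0) = MvPowerSeries.X 0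
      rw [haL0, SubstAux.SubGen_iota bL hbL χ, hfamb, SubstAux.iota_comp χi hχi0 χ, hBA,
        SubstAux.iota_X]
    · show SubstAux.SubGen bL (aL 1) = MvPowerSeries.X 1
      rw [haL1, SubstAux.SubGen_mul hbL, SubstAux.SubGen_X hbL 1,
        SubstAux.SubGen_iota bL hbL U, hfamb, SubstAux.iota_comp χi hχi0 U, hbL1, ← hUqd,
        mul_assoc, ← SubstAux.iota_mul]
      have : Ub * Uq = 1 := by rw [mul_comm]; exact hUqUb
      rw [this, SubstAux.iota_one, mul_one]
  have hUbU : U * SubstAux.comp χ Ub = 1 := by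
    have h1 : SubstAux.comp χ Uq = U := by
      rw [hUqd, SubstAux.comp_assoc χ χi hχ0 hχi0 U, hAB, SubstAux.comp_Xid]
    calc U * SubstAux.comp χ Ub = SubstAux.comp χ Uq * SubstAux.comp χ Ub := by rw [h1]
      _ = SubstAux.comp χ (Uq * Ub) := (SubstAux.comp_mul χ hχ0 Uq Ub).symm
      _ = 1 := by rw [hUqUb, SubstAux.comp_one]
  have hab : ∀ j, SubstAux.SubGen aL (bL j) = MvPowerSeries.X j := by
    intro j
    fin_cases j
    · show SubstAux.SubGen aL (bL 0) = MvPowerSeries.X 0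
      rw [hbL0, SubstAux.SubGen_iota aL haL χi, hfama, SubstAux.iota_comp χ hχ0 χi, hAB,
        SubstAux.iota_X]
    · show SubstAux.SubGen aL (bL 1) = MvPowerSeries.X 1
      rw [hbL1, SubstAux.SubGen_mul haL, SubstAux.SubGen_X haL 1,
        SubstAux.SubGen_iota aL haL Ub, hfama, SubstAux.iota_comp χ hχ0 Ub, haL1,
        mul_assoc, ← SubstAux.iota_mul, hUbU, SubstAux.iota_one, mul_one]
  -- the automorphisms
  refine ⟨SubstAux.subGenEquiv aL bL haL hbL hab hba,
    (SubstAux.compEquiv σ hσ0 hσ1).symm, ?_⟩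
  intro f
  rw [AlgEquiv.eq_symm_apply, SubstAux.compEquiv_apply, SubstAux.subGenEquiv_apply]
  rw [SubstAux.substPair_eq, SubstAux.substPair_eq]
  -- constant coefficient facts for the parametrization families
  have hφ : ∀ j, MvPowerSeries.constantCoeff
      ((![PowerSeries.X ^ 3, PowerSeries.X ^ k + PowerSeries.X ^ (k + m)
        + PowerSeries.C a * PowerSeries.X ^ (k + m + 3)] : Fin 2 → PowerSeries K) j) = 0 := by
    intro j
    fin_cases j
    · exact hu30
    · show PowerSeries.constantCoeff (PowerSeries.X ^ k + PowerSeries.X ^ (k + m)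
        + PowerSeries.C a * PowerSeries.X ^ (k + m + 3)) = 0
      rw [map_add, map_add, map_mul, SubstAux.constantCoeff_X_pow k (by omega),
        SubstAux.constantCoeff_X_pow (k + m) (by omega),
        SubstAux.constantCoeff_X_pow (k + m + 3) (by omega), mul_zero, add_zero, add_zero]
  have hψ : ∀ j, MvPowerSeries.constantCoeff
      ((![PowerSeries.X ^ 3, PowerSeries.X ^ k + PowerSeries.X ^ (k + m)
        + PowerSeries.C a * PowerSeries.X ^ (k + m + 3)
        + PowerSeries.C b * PowerSeries.X ^ (k + m + 3 * i)] : Fin 2 → PowerSeries K) j) = 0 := by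
    intro j
    fin_cases j
    · exact hu30
    · show PowerSeries.constantCoeff (PowerSeries.X ^ k + PowerSeries.X ^ (k + m)
        + PowerSeries.C a * PowerSeries.X ^ (k + m + 3)
        + PowerSeries.C b * PowerSeries.X ^ (k + m + 3 * i)) = 0
      rw [map_add, map_add, map_add, map_mul, map_mul,
        SubstAux.constantCoeff_X_pow k (by omega),
        SubstAux.constantCoeff_X_pow (k + m) (by omega),
        SubstAux.constantCoeff_X_pow (k + m + 3) (by omega),
        SubstAux.constantCoeff_X_pow (k + m + 3 * i) (by omega)]
      ring
  -- compose on both sides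
  show SubstAux.SubGen (fun _ : Unit => σ) _ = _
  rw [SubstAux.SubGen_SubGen (fun _ : Unit => hσ0) hφ f,
    SubstAux.SubGen_SubGen hψ haL f]
  -- reduce to equality of the two Fin-2 families
  have hfameq : (fun j => SubstAux.SubGen (fun _ : Unit => σ)
        ((![PowerSeries.X ^ 3, PowerSeries.X ^ k + PowerSeries.X ^ (k + m)
          + PowerSeries.C a * PowerSeries.X ^ (k + m + 3)] : Fin 2 → PowerSeries K) j))
      = fun j => SubstAux.SubGen
        (![PowerSeries.X ^ 3, PowerSeries.X ^ k + PowerSeries.X ^ (k + m)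
          + PowerSeries.C a * PowerSeries.X ^ (k + m + 3)
          + PowerSeries.C b * PowerSeries.X ^ (k + m + 3 * i)] : Fin 2 → PowerSeries K)
        (aL j) := by
    funext j
    fin_cases j
    · -- first coordinate
      show SubstAux.comp σ (PowerSeries.X ^ 3) = SubstAux.SubGen _ (aL 0)
      rw [haL0, SubstAux.SubGen_iota _ hψ χ]
      show SubstAux.comp σ (PowerSeries.X ^ 3)
          = SubstAux.comp ((PowerSeries.X : PowerSeries K) ^ 3) χ
      rw [SubstAux.comp_pow σ hσ0, SubstAux.comp_X σ hσ0, hχd, SubstAux.comp_mul _ hu30,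
        SubstAux.comp_X _ hu30, SubstAux.comp_pow _ hu30, ← hs3, hσd]
      ring
    · -- second coordinate
      show SubstAux.comp σ (PowerSeries.X ^ k + PowerSeries.X ^ (k + m)
          + PowerSeries.C a * PowerSeries.X ^ (k + m + 3)) = SubstAux.SubGen _ (aL 1)
      rw [haL1, SubstAux.SubGen_mul hψ, SubstAux.SubGen_X hψ 1,
        SubstAux.SubGen_iota _ hψ U]
      have hred : SubstAux.SubGen (fun _ : Unit =>
          (![PowerSeries.X ^ 3, PowerSeries.X ^ k + PowerSeries.X ^ (k + m)
            + PowerSeries.C a * PowerSeries.X ^ (k + m + 3)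
            + PowerSeries.C b * PowerSeries.X ^ (k + m + 3 * i)] : Fin 2 → PowerSeries K) 0) U
          = s3 ^ k := by
        show SubstAux.comp ((PowerSeries.X : PowerSeries K) ^ 3) U = s3 ^ k
        rw [hUd, SubstAux.comp_pow _ hu30, ← hs3]
      rw [hred]
      show SubstAux.comp σ (PowerSeries.X ^ k + PowerSeries.X ^ (k + m)
          + PowerSeries.C a * PowerSeries.X ^ (k + m + 3))
        = (PowerSeries.X ^ k + PowerSeries.X ^ (k + m)
            + PowerSeries.C a * PowerSeries.X ^ (k + m + 3)
            + PowerSeries.C b * PowerSeries.X ^ (k + m + 3 * i)) * s3 ^ k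
      rw [SubstAux.comp_add, SubstAux.comp_add, SubstAux.comp_pow σ hσ0,
        SubstAux.comp_pow σ hσ0, SubstAux.comp_mul σ hσ0, SubstAux.comp_C,
        SubstAux.comp_pow σ hσ0, SubstAux.comp_X σ hσ0, hσd]
      linear_combination (PowerSeries.X ^ (k + m) * s3 ^ k) * h3eq
  rw [hfameq]
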